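/- Let f = y^{γ₊}x^α − b·y^{γ₋}x^β be a nonzero non-hyperbolic binomial with b ≠ 0 and α, β of disjoint supports. Then for every point ξ ∈ W, the E-order of f can be computed in terms of the exponents: Eord_ξ(f) = min(|α|_ξ, |β|_ξ). -/

import Mathlib

open MvPolynomial

noncomputable section

/-- The variable index type: `x`-variables indexed by `Fin s`, `y`-variables by `Fin r`. -/
abbrev BV (s r : ℕ) : Type := Fin s ⊕ Fin r

/-- The polynomial ring `R = K[x_1,…,x_s,y_1,…,y_r]`. -/
abbrev BR (K : Type) [Field K] (s r : ℕ) : Type := MvPolynomial (BV s r) K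

variable (K : Type) [Field K] (s r : ℕ)

/-- `W`: the set of points all of whose `y`-coordinates are nonzero. -/
def Wset : Set (BV s r → K) := {ξ | ∀ j : Fin r, ξ (Sum.inr j) ≠ 0}

/-- `I_ξ`: the ideal generated by the variables vanishing at `ξ`. -/
def Ivan (ξ : BV s r → K) : Ideal (BR K s r) :=
  Ideal.span {p : BR K s r | ∃ i : BV s r, ξ i = 0 ∧ p = X i}

/-- `m_ξ`: the maximal ideal of polynomials vanishing at `ξ`. -/
def mAt (ξ : BV s r → K) : Ideal (BR K s r) := RingHom.ker (eval ξ)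

instance mAt_isMaximal (ξ : BV s r → K) : (mAt K s r ξ).IsMaximal :=
  RingHom.ker_isMaximal_of_surjective _ (fun a => ⟨C a, eval_C a⟩)

/-- `O_ξ`: the localization of `R` at `m_ξ`. -/
abbrev Oloc (ξ : BV s r → K) : Type := Localization.AtPrime (mAt K s r ξ)

/-- The `E`-order of an ideal `J` at a point `ξ`:
`sup { m : J·O_ξ ⊆ (I_ξ·O_ξ)^m }`. -/
def Eord (ξ : BV s r → K) (J : Ideal (BR K s r)) : ℕ∞ :=
  sSup ((fun m : ℕ => (m : ℕ∞)) ''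
    {m : ℕ | J.map (algebraMap (BR K s r) (Oloc K s r ξ)) ≤
      ((Ivan K s r ξ).map (algebraMap (BR K s r) (Oloc K s r ξ))) ^ m})

/-- The order of an ideal `J` at a point `ξ`:
`sup { m : J·O_ξ ⊆ (m_ξ·O_ξ)^m }`. -/
def ordAt (ξ : BV s r → K) (J : Ideal (BR K s r)) : ℕ∞ :=
  sSup ((fun m : ℕ => (m : ℕ∞)) ''
    {m : ℕ | J.map (algebraMap (BR K s r) (Oloc K s r ξ)) ≤
      ((mAt K s r ξ).map (algebraMap (BR K s r) (Oloc K s r ξ))) ^ m})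

/-- `x^α`. -/
def xPow (α : Fin s → ℕ) : BR K s r := ∏ i, X (Sum.inl i) ^ α i

/-- `y^γ` for `γ ∈ ℕ^r`. -/
def yPow (γ : Fin r → ℕ) : BR K s r := ∏ j, X (Sum.inr j) ^ γ j

/-- positive part `γ₊` of `γ ∈ ℤ^r`. -/
def ipos (γ : Fin r → ℤ) : Fin r → ℕ := fun j => (γ j).toNat

/-- negative part `γ₋` of `γ ∈ ℤ^r`. -/
def ineg (γ : Fin r → ℤ) : Fin r → ℕ := fun j => (-(γ j)).toNat

/-- a non-hyperbolic binomial `y^{γ₊}x^α − b·y^{γ₋}x^β`. -/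
def nhb (γ : Fin r → ℤ) (α β : Fin s → ℕ) (b : K) : BR K s r :=
  yPow K s r (ipos r γ) * xPow K s r α - C b * yPow K s r (ineg r γ) * xPow K s r β

/-- a hyperbolic equation `y^{δ₋} − μ·y^{δ₊}`. -/
def hyp (δ : Fin r → ℤ) (μ : K) : BR K s r :=
  yPow K s r (ineg r δ) - C μ * yPow K s r (ipos r δ)

/-- a generator of a binomial ideal:
`x^λ(y^{δ₋} − μ y^{δ₊})` or `x^ν(y^{γ₊}x^α − b y^{γ₋}x^β)` with `α,β` of disjoint supports. -/
def IsBinomGen (g : BR K s r) : Prop :=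
  (∃ (lam : Fin s → ℕ) (δ : Fin r → ℤ) (μ : K),
      g = xPow K s r lam * hyp K s r δ μ) ∨
  (∃ (ν α β : Fin s → ℕ) (γ : Fin r → ℤ) (b : K),
      (∀ i, α i = 0 ∨ β i = 0) ∧ g = xPow K s r ν * nhb K s r γ α β b)

/-- a binomial ideal: an ideal generated by finitely many binomial generators. -/
def IsBinomialIdeal (J : Ideal (BR K s r)) : Prop :=
  ∃ S : Finset (BR K s r), (∀ g ∈ S, IsBinomGen K s r g) ∧ J = Ideal.span (S : Set (BR K s r))

open Classical in
/-- `|ν|_ξ = Σ_{i : ξ_i = 0} ν_i` (sum over vanishing x-coordinates). -/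
def nsumAt (ξ : BV s r → K) (ν : Fin s → ℕ) : ℕ :=
  ∑ i, if ξ (Sum.inl i) = 0 then ν i else 0


/-- `Option A ⊕ B ≃ Option (A ⊕ B)`. -/
def optSum (A B : Type) : Option A ⊕ B ≃ Option (A ⊕ B) :=
  ((Equiv.optionEquivSumPUnit A).sumCongr (Equiv.refl B)).trans <|
    (Equiv.sumAssoc A PUnit.{1} B).trans <|
      ((Equiv.refl A).sumCongr (Equiv.sumComm PUnit.{1} B)).trans <|
        (Equiv.sumAssoc A B PUnit.{1}).symm.trans
          (Equiv.optionEquivSumPUnit (A ⊕ B)).symm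

/-- The variables of `K[x_1,…,x_{s+1},y]` split as the variable `x_1` (the `none` case)
and the variables of `K[x_2,…,x_{s+1},y]`. -/
def varEquiv : BV (s + 1) r ≃ Option (BV s r) :=
  ((finSuccEquiv s).sumCongr (Equiv.refl (Fin r))).trans (optSum (Fin s) (Fin r))

/-- Identification of `R = K[x_1,…,x_{s+1},y]` with `R'[x_1]`, `R' = K[x_2,…,x_{s+1},y]`. -/
def toPoly : BR K (s + 1) r ≃ₐ[K] Polynomial (BR K s r) :=
  (renameEquiv K (varEquiv s r)).trans (optionEquivLeft K (BV s r))

/-- `a_{f,k}`: the coefficient of `x_1^k` in `f` under the identification `R = R'[x_1]`. -/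
def coeffAt (f : BR K (s + 1) r) (k : ℕ) : BR K s r :=
  (toPoly K s r f).coeff k

/-- The coefficient ideal `C(P,c)` of `P` along `E` with respect to `V = {x_1 = 0}`,
with factorial normalization: it is generated by the `a_{f,k}^{c!/(c-k)}`, `f ∈ P`, `k < c`. -/
def coeffIdeal (P : Ideal (BR K (s + 1) r)) (c : ℕ) : Ideal (BR K s r) :=
  Ideal.span {g : BR K s r |
    ∃ f ∈ P, ∃ k < c, g = coeffAt K s r f k ^ (Nat.factorial c / (c - k))}

/-- `ξ'`: the point `ξ` with its first (`x_1`) coordinate removed. -/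
def resPt (ξ : BV (s + 1) r → K) : BV s r → K :=
  fun v => match v with
  | Sum.inl i => ξ (Sum.inl i.succ)
  | Sum.inr j => ξ (Sum.inr j)

open Classical in
/-- The chart morphism `σ_j` of the blow-up along `Z = ∩_{i ∈ I} {x_i = 0}`:
`x_i ↦ x_i·x_j` for `i ∈ I ∖ {j}`, all other variables are fixed. -/
def chart (I : Finset (Fin s)) (j : Fin s) : BR K s r →ₐ[K] BR K s r :=
  aeval (fun v : BV s r => match v with
    | Sum.inl i => if i ∈ I ∧ i ≠ j then X (Sum.inl i) * X (Sum.inl j) else X (Sum.inl i)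
    | Sum.inr k => X (Sum.inr k))

end

noncomputable section Aux

lemma aux_key_dvd {R : Type} [CommRing R] [IsDomain R] {h : Polynomial R} {a m : ℕ}
    (h0 : h.coeff 0 ≠ 0) (hd : (Polynomial.X : Polynomial R) ^ m ∣ Polynomial.X ^ a * h) :
    m ≤ a := by
  by_contra hlt
  push_neg at hlt
  obtain ⟨q, hq⟩ := hd
  have hx : (Polynomial.X : Polynomial R) ^ a ≠ 0 := pow_ne_zero _ Polynomial.X_ne_zero
  have hh : h = Polynomial.X ^ (m - a) * q := by
    apply mul_left_cancel₀ hx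
    rw [hq, ← mul_assoc, ← pow_add]
    congr 2
    omega
  apply h0
  rw [hh, Polynomial.mul_coeff_zero, Polynomial.coeff_X_pow]
  have : ¬ (0 = m - a) := by omega
  simp [this]

variable (K : Type) [Field K] (s r : ℕ)

open Classical in
/-- The weighting map `R → R[t]`, `x_i ↦ x_i·t` for vanishing variables. -/
def Phi (ξ : BV s r → K) : BR K s r →ₐ[K] Polynomial (BR K s r) :=
  aeval (fun i => if ξ i = 0 then Polynomial.C (X i) * Polynomial.X else Polynomial.C (X i))

open Classical in
lemma Phi_X (ξ : BV s r → K) (i : BV s r) :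
    Phi K s r ξ (X i) =
      if ξ i = 0 then Polynomial.C (X i) * Polynomial.X else Polynomial.C (X i) := by
  rw [Phi, aeval_X]

lemma Phi_C (ξ : BV s r → K) (b : K) :
    Phi K s r ξ (C b) = Polynomial.C (C b) := by
  rw [Phi, aeval_C, Polynomial.algebraMap_apply, MvPolynomial.algebraMap_eq]

lemma Phi_xPow (ξ : BV s r → K) (ν : Fin s → ℕ) :
    Phi K s r ξ (xPow K s r ν) =
      Polynomial.C (xPow K s r ν) * Polynomial.X ^ nsumAt K s r ξ ν := by
  classical
  rw [xPow, nsumAt, map_prod]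
  have h1 : ∀ i : Fin s, Phi K s r ξ (X (Sum.inl i) ^ ν i) =
      Polynomial.C (X (Sum.inl i) : BR K s r) ^ ν i *
        Polynomial.X ^ (if ξ (Sum.inl i) = 0 then ν i else 0) := by
    intro i
    classical
    rw [map_pow, Phi_X]
    split_ifs with h
    · rw [mul_pow]
    · rw [pow_zero, mul_one]
  rw [Finset.prod_congr rfl (fun i _ => h1 i), Finset.prod_mul_distrib,
    Finset.prod_pow_eq_pow_sum]
  congr 1
  rw [map_prod]
  exact Finset.prod_congr rfl (fun i _ => (map_pow _ _ _).symm)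

lemma Phi_yPow (ξ : BV s r → K) (hξ : ξ ∈ Wset K s r) (δ : Fin r → ℕ) :
    Phi K s r ξ (yPow K s r δ) = Polynomial.C (yPow K s r δ) := by
  rw [yPow, map_prod, map_prod]
  apply Finset.prod_congr rfl
  intro j _
  rw [map_pow, map_pow, Phi_X, if_neg (hξ j)]

lemma eval_Phi_eval_zero (ξ : BV s r → K) (p : BR K s r) :
    eval ξ ((Phi K s r ξ p).eval 0) = eval ξ p := by
  induction p using MvPolynomial.induction_on with
  | C a => rw [Phi_C]; simp
  | add p q hp hq => rw [map_add, Polynomial.eval_add, map_add, eval_add, hp, hq]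
  | mul_X p i hp =>
      rw [map_mul, Polynomial.eval_mul, map_mul, eval_mul, hp, Phi_X]
      congr 1
      split_ifs with h
      · simp [h]
      · simp

lemma Phi_dvd_of_mem_pow (ξ : BV s r → K) {m : ℕ} {p : BR K s r}
    (hp : p ∈ (Ivan K s r ξ) ^ m) :
    (Polynomial.X : Polynomial (BR K s r)) ^ m ∣ Phi K s r ξ p := by
  have h1 : (Ivan K s r ξ).map (Phi K s r ξ).toRingHom ≤
      Ideal.span {(Polynomial.X : Polynomial (BR K s r))} := by
    rw [Ivan, Ideal.map_span, Ideal.span_le]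
    rintro q hq
    obtain ⟨p, hp, rfl⟩ := hq
    obtain ⟨i, hi, rfl⟩ := hp
    show (Phi K s r ξ (X i) : Polynomial (BR K s r)) ∈ _
    rw [Phi_X, if_pos hi]
    exact Ideal.mul_mem_left _ _ (Ideal.subset_span rfl)
  have h2 : Phi K s r ξ p ∈ ((Ivan K s r ξ).map (Phi K s r ξ).toRingHom) ^ m := by
    rw [← Ideal.map_pow]
    exact Ideal.mem_map_of_mem _ hp
  have h3 := (Ideal.pow_right_mono h1 m) h2
  rwa [Ideal.span_singleton_pow, Ideal.mem_span_singleton] at h3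

lemma xPow_mem_Ivan_pow (ξ : BV s r → K) (ν : Fin s → ℕ) :
    xPow K s r ν ∈ (Ivan K s r ξ) ^ (nsumAt K s r ξ ν) := by
  classical
  rw [xPow, nsumAt]
  have key : ∀ t : Finset (Fin s), (∏ i ∈ t, X (Sum.inl i) ^ ν i : BR K s r) ∈
      (Ivan K s r ξ) ^ (∑ i ∈ t, if ξ (Sum.inl i) = 0 then ν i else 0) := by
    intro t
    induction t using Finset.induction_on with
    | empty => simp
    | @insert a t hnot ih =>
        rw [Finset.prod_insert hnot, Finset.sum_insert hnot, pow_add]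
        refine Ideal.mul_mem_mul ?_ ih
        split_ifs with h
        · refine Ideal.pow_mem_pow ?_ _
          rw [Ivan]
          exact Ideal.subset_span ⟨Sum.inl a, h, rfl⟩
        · simp [Ideal.one_eq_top]
  exact key Finset.univ

end Aux
/-- for a nonzero non-hyperbolic binomial `f = y^{γ₊}x^α − b·y^{γ₋}x^β` with
`b ≠ 0` and `α, β` of disjoint supports, the `E`-order can be computed from the exponents:
`Eord_ξ(f) = min(|α|_ξ, |β|_ξ)` for every `ξ ∈ W`. -/
theorem Eord_eq_min_of_exponents
    (K : Type) [Field K] [IsAlgClosed K] (s r : ℕ)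
    (γ : Fin r → ℤ) (α β : Fin s → ℕ) (b : K) (hb : b ≠ 0)
    (hdisj : ∀ i, α i = 0 ∨ β i = 0)
    (hne : nhb K s r γ α β b ≠ 0)
    (ξ : BV s r → K) (hξ : ξ ∈ Wset K s r) :
    Eord K s r ξ (Ideal.span {nhb K s r γ α β b}) =
      (min (nsumAt K s r ξ α) (nsumAt K s r ξ β) : ℕ∞) := by
  classical
  set f : BR K s r := nhb K s r γ α β b with hf
  set a : ℕ := nsumAt K s r ξ α with ha
  set c : ℕ := nsumAt K s r ξ β with hc
  set m0 : ℕ := min a c with hm0def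
  set I : Ideal (BR K s r) := Ivan K s r ξ with hI
  set φ : BR K s r →+* Oloc K s r ξ := algebraMap (BR K s r) (Oloc K s r ξ) with hφ
  set M1 : BR K s r := yPow K s r (ipos r γ) * xPow K s r α with hM1def
  set M2 : BR K s r := C b * yPow K s r (ineg r γ) * xPow K s r β with hM2def
  have hfM : f = M1 - M2 := by rw [hf, nhb, hM1def, hM2def]
  -- nonvanishing of the two monomials
  have hM1 : M1 ≠ 0 := by
    intro h
    have := congrArg (eval (fun _ => (1 : K))) h
    simp [hM1def, yPow, xPow] at this
  have hM2 : M2 ≠ 0 := by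
    intro h
    have := congrArg (eval (fun _ => (1 : K))) h
    simp [hM2def, yPow, xPow] at this
    exact hb this
  -- membership: f ∈ I ^ m0
  have hfmem : f ∈ I ^ m0 := by
    rw [hfM]
    apply sub_mem
    · refine Ideal.pow_le_pow_right (min_le_left a c) ?_
      exact Ideal.mul_mem_left _ _ (xPow_mem_Ivan_pow K s r ξ α)
    · refine Ideal.pow_le_pow_right (min_le_right a c) ?_
      exact Ideal.mul_mem_left _ _ (xPow_mem_Ivan_pow K s r ξ β)
  have hm0mem : Ideal.map φ (Ideal.span {f}) ≤ (Ideal.map φ I) ^ m0 := by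
    rw [← Ideal.map_pow, Ideal.map_span, Set.image_singleton,
      Ideal.span_singleton_le_iff_mem]
    exact Ideal.mem_map_of_mem _ hfmem
  -- upper bound
  have hub : ∀ m : ℕ, Ideal.map φ (Ideal.span {f}) ≤ (Ideal.map φ I) ^ m → m ≤ m0 := by
    intro m hm
    have hf' : φ f ∈ Ideal.map φ (I ^ m) := by
      rw [Ideal.map_pow]
      exact hm (Ideal.mem_map_of_mem _ (Ideal.subset_span rfl))
    obtain ⟨⟨⟨p, hpI⟩, ⟨u, hu⟩⟩, heq⟩ :=
      (IsLocalization.mem_map_algebraMap_iff (mAt K s r ξ).primeCompl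
        (Oloc K s r ξ)).mp hf'
    have hinj : Function.Injective φ :=
      IsLocalization.injective (Oloc K s r ξ)
        (mAt K s r ξ).primeCompl_le_nonZeroDivisors
    have hfu : f * u ∈ I ^ m := by
      have hfp : f * u = p := hinj (by rw [map_mul]; exact heq)
      rw [hfp]; exact hpI
    have hu0 : eval ξ u ≠ 0 := by
      intro h0
      exact hu (RingHom.mem_ker.mpr h0)
    have hcu : (Phi K s r ξ u).coeff 0 ≠ 0 := by
      intro h0
      apply hu0
      rw [← eval_Phi_eval_zero K s r ξ u, ← Polynomial.coeff_zero_eq_eval_zero, h0, map_zero]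
    have hdvd : (Polynomial.X : Polynomial (BR K s r)) ^ m ∣
        Phi K s r ξ f * Phi K s r ξ u := by
      rw [← map_mul]
      exact Phi_dvd_of_mem_pow K s r ξ hfu
    have hPf1 : Phi K s r ξ M1 = Polynomial.C M1 * Polynomial.X ^ a := by
      rw [hM1def, map_mul, Phi_yPow K s r ξ hξ, Phi_xPow, ← ha, map_mul, mul_assoc]
    have hPf2 : Phi K s r ξ M2 = Polynomial.C M2 * Polynomial.X ^ c := by
      rw [hM2def, map_mul, map_mul, Phi_C, Phi_yPow K s r ξ hξ, Phi_xPow, ← hc,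
        map_mul, map_mul]
      ring
    have hPf : Phi K s r ξ f =
        Polynomial.C M1 * Polynomial.X ^ a - Polynomial.C M2 * Polynomial.X ^ c := by
      rw [hfM, map_sub, hPf1, hPf2]
    rcases le_or_gt a c with hac | hca
    · -- m0 = a
      set h : Polynomial (BR K s r) :=
        Polynomial.C M1 - Polynomial.C M2 * Polynomial.X ^ (c - a) with hhdef
      have hsplit : Phi K s r ξ f = Polynomial.X ^ a * h := by
        have hca' : a + (c - a) = c := by omega
        rw [hPf, hhdef, mul_sub]
        refine congrArg₂ (· - ·) ?_ ?_
        · ring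
        · rw [mul_left_comm, ← pow_add, hca']
      have hch : h.coeff 0 ≠ 0 := by
        rw [hhdef, Polynomial.coeff_sub, Polynomial.coeff_C_mul,
          Polynomial.coeff_X_pow, Polynomial.coeff_C]
        rcases eq_or_lt_of_le hac with hEq | hLt
        · rw [if_pos (rfl : (0:ℕ) = 0), if_pos (by omega : (0:ℕ) = c - a),
            mul_one, ← hfM]
          exact hne
        · rw [if_pos (rfl : (0:ℕ) = 0), if_neg (by omega : ¬ (0:ℕ) = c - a),
            mul_zero, sub_zero]
          exact hM1
      have : m ≤ a := by
        apply aux_key_dvd (h := h * Phi K s r ξ u)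
        · rw [Polynomial.mul_coeff_zero]
          exact mul_ne_zero hch hcu
        · rw [← mul_assoc, ← hsplit]; exact hdvd
      omega
    · -- m0 = c
      set h : Polynomial (BR K s r) :=
        Polynomial.C M1 * Polynomial.X ^ (a - c) - Polynomial.C M2 with hhdef
      have hsplit : Phi K s r ξ f = Polynomial.X ^ c * h := by
        have hca' : c + (a - c) = a := by omega
        rw [hPf, hhdef, mul_sub]
        refine congrArg₂ (· - ·) ?_ ?_
        · rw [mul_left_comm, ← pow_add, hca']
        · ring
      have hch : h.coeff 0 ≠ 0 := by
        have hac0 : ¬ ((0:ℕ) = a - c) := by omega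
        have hco : h.coeff 0 = -M2 := by
          rw [hhdef, Polynomial.coeff_sub, Polynomial.coeff_C_mul,
            Polynomial.coeff_X_pow, if_neg hac0, Polynomial.coeff_C, if_pos rfl,
            mul_zero, zero_sub]
        rw [hco, neg_ne_zero]
        exact hM2
      have : m ≤ c := by
        apply aux_key_dvd (h := h * Phi K s r ξ u)
        · rw [Polynomial.mul_coeff_zero]
          exact mul_ne_zero hch hcu
        · rw [← mul_assoc, ← hsplit]; exact hdvd
      omega
  -- conclude
  rw [Eord]
  apply le_antisymm
  · apply sSup_le
    rintro x ⟨m, hm, rfl⟩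
    simp only
    have h1 := hub m hm
    rw [hm0def] at h1
    refine le_inf ?_ ?_
    · exact_mod_cast h1.trans inf_le_left
    · exact_mod_cast h1.trans inf_le_right
  · apply le_sSup
    refine ⟨m0, hm0mem, ?_⟩
    simp only
    rw [hm0def]
    exact_mod_cast rfl
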